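/- Let k be a finite field and x ∈ k[[t]] a formal power series that is a unit and is an s-th power in k[[t]]^× for infinitely many s divisible by arbitrarily high powers of p = char(k). Then x is a root of unity, of order dividing |k| - 1. -/

import Mathlib

theorem stmt_18 (k : Type*) [Field k] [Fintype k] (x : (PowerSeries k)ˣ)
    (S : Set ℕ) (hS : S.Infinite)
    (hpow : ∀ s ∈ S, 0 < s ∧ ∃ y : (PowerSeries k)ˣ, y ^ s = x)
    (hdivp : ∀ m : ℕ, ∃ s ∈ S, (ringChar k) ^ m ∣ s) :
    x ^ (Fintype.card k - 1) = 1 := by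
  set p := ringChar k with hpdef
  have hp : p.Prime := CharP.char_is_prime k p
  haveI : Fact p.Prime := ⟨hp⟩
  haveI : CharP (PowerSeries k) p :=
    charP_of_injective_ringHom PowerSeries.C_injective p
  apply Units.ext
  rw [Units.val_pow_eq_pow_val, Units.val_one]
  ext n
  have hm : n < p ^ n := Nat.lt_pow_self hp.one_lt
  obtain ⟨s, hsS, hdvd⟩ := hdivp n
  obtain ⟨hs, y, hys⟩ := hpow s hsS
  obtain ⟨r, hr⟩ := hdvd
  have hxy : (x : PowerSeries k) = (y : PowerSeries k) ^ s := by
    rw [← hys]; simp [Units.val_pow_eq_pow_val]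
  set v : PowerSeries k := (y : PowerSeries k) ^ (Fintype.card k - 1) with hv
  have hc : PowerSeries.constantCoeff v = 1 := by
    have hy0 : PowerSeries.constantCoeff (y : PowerSeries k) ≠ 0 :=
      (y.isUnit.map (PowerSeries.constantCoeff (R := k))).ne_zero
    rw [hv, map_pow]
    exact FiniteField.pow_card_sub_one_eq_one _ hy0
  set g : PowerSeries k := v ^ r - 1 with hg
  have hg0 : PowerSeries.constantCoeff g = 0 := by
    simp [hg, map_pow, hc]
  have key : (x : PowerSeries k) ^ (Fintype.card k - 1) = 1 + g ^ (p ^ n) := by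
    have h1 : (x : PowerSeries k) ^ (Fintype.card k - 1) = (v ^ r) ^ (p ^ n) := by
      rw [hxy, ← pow_mul, hv, ← pow_mul, ← pow_mul]
      congr 1
      rw [hr]; ring
    have h2 : v ^ r = 1 + g := by rw [hg]; ring
    rw [h1, h2, add_pow_char_pow, one_pow]
  have hdvdX : (PowerSeries.X : PowerSeries k) ^ (p ^ n) ∣ g ^ (p ^ n) :=
    pow_dvd_pow_of_dvd (PowerSeries.X_dvd_iff.mpr hg0) _
  have hcoeff : PowerSeries.coeff n (g ^ (p ^ n)) = 0 :=
    (PowerSeries.X_pow_dvd_iff.mp hdvdX) n hm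
  rw [key, map_add, hcoeff, add_zero]
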